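/- Let m ≥ 1, let M be a matroid with ground set [m], and let u ∈ ℤ^m with Σ_{j=1}^m u_j = 1. Then Σ_π (−1)^{m − l(π)} · rk_M(A_π(u)), the sum taken over all flags π of subsets of [m], equals 1 if u = e_i for some non-loop i of M, and equals 0 otherwise. (Equivalently: the u-weight equivariant Euler characteristic of the tautological tropical vector bundle E_M on the permutahedral toric variety equals the rank h^0 of its u-weight space of global sections, i.e. higher cohomologies of E_M vanish.) -/

import Mathlib

open scoped Classical

/-- A flag of subsets of `[m]`: a finite set of nonempty subsets of `Fin m`, totally
ordered by inclusion, containing the full set `[m]`.  Its length is `π.card`. -/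
def IsFlag (m : ℕ) (π : Finset (Finset (Fin m))) : Prop :=
  (∀ S ∈ π, S.Nonempty) ∧ Finset.univ ∈ π ∧ ∀ S ∈ π, ∀ T ∈ π, S ⊆ T ∨ T ⊆ S

/-- The rank of a set `X` in a matroid `M`: the largest cardinality of an
independent subset of `X`. -/
noncomputable def matroidRk {α : Type*} (M : Matroid α) (X : Set α) : ℕ :=
  sSup {n : ℕ | ∃ I, M.Indep I ∧ I ⊆ X ∧ I.ncard = n}

/-- The weight-`u` space of sections `H⁰(U_σ, E_M)_u = A_π(u)` of the tautological
tropical vector bundle over the chart of the cone `σ` corresponding to the flag `π`: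
those `i ∈ [m]` such that for every `S ∈ π`, `∑_{j∈S} u_j ≤ 1` if `i ∈ cl_M(S)` and
`∑_{j∈S} u_j ≤ 0` if `i ∉ cl_M(S)`. -/
def Aflag (m : ℕ) (M : Matroid (Fin m)) (u : Fin m → ℤ) (π : Finset (Finset (Fin m))) :
    Set (Fin m) :=
  {i | ∀ S ∈ π,
    if i ∈ M.closure (S : Set (Fin m)) then (∑ j ∈ S, u j) ≤ 1 else (∑ j ∈ S, u j) ≤ 0}

/-- The standard basis vector `e_i ∈ ℤ^m`. -/
def stdVec (m : ℕ) (i : Fin m) : Fin m → ℤ := fun j => if j = i then 1 else 0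

open Finset

set_option linter.unusedSectionVars false
set_option maxHeartbeats 2000000


namespace TautAux

set_option linter.unusedSectionVars false
variable {α : Type*} [DecidableEq α]

/-- the chain predicate -/
def chainP (C : Finset (Finset α)) : Prop := ∀ x ∈ C, ∀ y ∈ C, x ⊆ y ∨ y ⊆ x

/-- all chains inside `P` -/
noncomputable def chains (P : Finset (Finset α)) : Finset (Finset (Finset α)) :=
  P.powerset.filter chainP

/-- alternating chain sum -/
noncomputable def es (P : Finset (Finset α)) : ℤ := ∑ C ∈ chains P, (-1) ^ C.card

lemma mem_chains {P C : Finset (Finset α)} : C ∈ chains P ↔ C ⊆ P ∧ chainP C := by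
  simp [chains, mem_filter, mem_powerset]

lemma chainP_subset {C C' : Finset (Finset α)} (h : chainP C) (hsub : C' ⊆ C) : chainP C' :=
  fun x hx y hy => h x (hsub hx) y (hsub hy)

@[simp] lemma es_empty : es (∅ : Finset (Finset α)) = 1 := by
  have : chains (∅ : Finset (Finset α)) = {∅} := by
    ext C
    simp only [mem_chains, subset_empty, mem_singleton]
    constructor
    · rintro ⟨rfl, -⟩; rfl
    · rintro rfl; exact ⟨rfl, fun x hx => by simp at hx⟩
  simp [es, this]

end TautAux

namespace TautAux
set_option linter.unusedSectionVars false

variable {α : Type*} [DecidableEq α]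

lemma chains_erase (P : Finset (Finset α)) (z : Finset α) :
    (chains P).filter (fun C => z ∉ C) = chains (P.erase z) := by
  ext C
  simp only [mem_filter, mem_chains, Finset.subset_erase]
  tauto

lemma es_split {P : Finset (Finset α)} {z : Finset α} (hz : z ∈ P) :
    es P = es (P.erase z) - es (P.filter (· ⊂ z)) * es (P.filter (z ⊂ ·)) := by
  classical
  have hsplit : es P = (∑ C ∈ (chains P).filter (fun C => z ∈ C), (-1:ℤ)^C.card)
      + ∑ C ∈ (chains P).filter (fun C => z ∉ C), (-1:ℤ)^C.card :=
    (Finset.sum_filter_add_sum_filter_not _ _ _).symm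
  have h2 : ∑ C ∈ (chains P).filter (fun C => z ∉ C), (-1:ℤ)^C.card = es (P.erase z) := by
    rw [chains_erase]; rfl
  have h1 : ∑ C ∈ (chains P).filter (fun C => z ∈ C), (-1:ℤ)^C.card
      = ∑ p ∈ (chains (P.filter (· ⊂ z))) ×ˢ (chains (P.filter (z ⊂ ·))),
          -((-1:ℤ)^p.1.card * (-1:ℤ)^p.2.card) := by
    refine Finset.sum_nbij' (fun C => (C.filter (· ⊂ z), C.filter (z ⊂ ·)))
      (fun p => insert z (p.1 ∪ p.2)) ?_ ?_ ?_ ?_ ?_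
    · intro C hC
      simp only [mem_filter, mem_chains] at hC
      obtain ⟨⟨hCP, hCch⟩, hzC⟩ := hC
      simp only [Finset.mem_product, mem_chains]
      refine ⟨⟨fun x hx => ?_, chainP_subset hCch (filter_subset _ _)⟩,
              fun x hx => ?_, chainP_subset hCch (filter_subset _ _)⟩
      · simp only [mem_filter] at hx ⊢; exact ⟨hCP hx.1, hx.2⟩
      · simp only [mem_filter] at hx ⊢; exact ⟨hCP hx.1, hx.2⟩
    · intro p hp
      simp only [Finset.mem_product, mem_chains] at hp
      obtain ⟨⟨hA, hAch⟩, hB, hBch⟩ := hp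
      simp only [mem_filter, mem_chains]
      have hAz : ∀ x ∈ p.1, x ⊂ z := fun x hx => (mem_filter.1 (hA hx)).2
      have hBz : ∀ x ∈ p.2, z ⊂ x := fun x hx => (mem_filter.1 (hB hx)).2
      refine ⟨⟨?_, ?_⟩, mem_insert_self _ _⟩
      · intro x hx
        rcases mem_insert.1 hx with rfl | hx
        · exact hz
        rcases mem_union.1 hx with hx | hx
        · exact (mem_filter.1 (hA hx)).1
        · exact (mem_filter.1 (hB hx)).1
      · intro x hx y hy
        have hx' : x = z ∨ x ∈ p.1 ∨ x ∈ p.2 := by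
          rcases mem_insert.1 hx with h | h
          · exact Or.inl h
          rcases mem_union.1 h with h | h
          · exact Or.inr (Or.inl h)
          · exact Or.inr (Or.inr h)
        have hy' : y = z ∨ y ∈ p.1 ∨ y ∈ p.2 := by
          rcases mem_insert.1 hy with h | h
          · exact Or.inl h
          rcases mem_union.1 h with h | h
          · exact Or.inr (Or.inl h)
          · exact Or.inr (Or.inr h)
        rcases hx' with rfl | hx' | hx'
        · rcases hy' with rfl | hy' | hy'
          · exact Or.inl subset_rfl
          · exact Or.inr (hAz _ hy').subset
          · exact Or.inl (hBz _ hy').subset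
        · rcases hy' with rfl | hy' | hy'
          · exact Or.inl (hAz _ hx').subset
          · exact hAch _ hx' _ hy'
          · exact Or.inl (ssubset_trans (hAz _ hx') (hBz _ hy')).subset
        · rcases hy' with rfl | hy' | hy'
          · exact Or.inr (hBz _ hx').subset
          · exact Or.inr (ssubset_trans (hAz _ hy') (hBz _ hx')).subset
          · exact hBch _ hx' _ hy'
    · intro C hC
      simp only [mem_filter, mem_chains] at hC
      obtain ⟨⟨hCP, hCch⟩, hzC⟩ := hC
      ext x
      simp only [mem_insert, mem_union, mem_filter]
      constructor
      · rintro (rfl | ⟨hx, -⟩ | ⟨hx, -⟩) <;> assumption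
      · intro hx
        by_cases hxz : x = z
        · exact Or.inl hxz
        rcases hCch x hx z hzC with h | h
        · exact Or.inr (Or.inl ⟨hx, Finset.ssubset_iff_subset_ne.2 ⟨h, hxz⟩⟩)
        · exact Or.inr (Or.inr ⟨hx, Finset.ssubset_iff_subset_ne.2 ⟨h, Ne.symm hxz⟩⟩)
    · intro p hp
      simp only [Finset.mem_product, mem_chains] at hp
      obtain ⟨⟨hA, hAch⟩, hB, hBch⟩ := hp
      have hAz : ∀ x ∈ p.1, x ⊂ z := fun x hx => (mem_filter.1 (hA hx)).2
      have hBz : ∀ x ∈ p.2, z ⊂ x := fun x hx => (mem_filter.1 (hB hx)).2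
      have e1 : (insert z (p.1 ∪ p.2)).filter (· ⊂ z) = p.1 := by
        ext x
        simp only [mem_filter, mem_insert, mem_union]
        constructor
        · rintro ⟨rfl | hx | hx, hlt⟩
          · exact absurd hlt (ssubset_irrefl _)
          · exact hx
          · exact absurd hlt (ssubset_asymm (hBz _ hx))
        · intro hx; exact ⟨Or.inr (Or.inl hx), hAz _ hx⟩
      have e2 : (insert z (p.1 ∪ p.2)).filter (z ⊂ ·) = p.2 := by
        ext x
        simp only [mem_filter, mem_insert, mem_union]
        constructor
        · rintro ⟨rfl | hx | hx, hlt⟩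
          · exact absurd hlt (ssubset_irrefl _)
          · exact absurd hlt (ssubset_asymm (hAz _ hx))
          · exact hx
        · intro hx; exact ⟨Or.inr (Or.inr hx), hBz _ hx⟩
      exact Prod.ext e1 e2
    · intro C hC
      simp only [mem_filter, mem_chains] at hC
      obtain ⟨⟨hCP, hCch⟩, hzC⟩ := hC
      have hrec : C = insert z ((C.filter (· ⊂ z)) ∪ (C.filter (z ⊂ ·))) := by
        ext x
        simp only [mem_insert, mem_union, mem_filter]
        constructor
        · intro hx
          by_cases hxz : x = z
          · exact Or.inl hxz
          rcases hCch x hx z hzC with h | h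
          · exact Or.inr (Or.inl ⟨hx, Finset.ssubset_iff_subset_ne.2 ⟨h, hxz⟩⟩)
          · exact Or.inr (Or.inr ⟨hx, Finset.ssubset_iff_subset_ne.2 ⟨h, Ne.symm hxz⟩⟩)
        · rintro (rfl | ⟨hx, -⟩ | ⟨hx, -⟩) <;> assumption
      have hdisj : Disjoint (C.filter (· ⊂ z)) (C.filter (z ⊂ ·)) := by
        rw [Finset.disjoint_left]
        intro x hx hx'
        exact absurd ((mem_filter.1 hx).2) (ssubset_asymm (mem_filter.1 hx').2)
      have hznot : z ∉ (C.filter (· ⊂ z)) ∪ (C.filter (z ⊂ ·)) := by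
        simp only [mem_union, mem_filter]
        rintro (⟨-, h⟩ | ⟨-, h⟩) <;> exact absurd h (ssubset_irrefl _)
      have hcard : C.card = (C.filter (· ⊂ z)).card + (C.filter (z ⊂ ·)).card + 1 := by
        conv_lhs => rw [hrec]
        rw [Finset.card_insert_of_notMem hznot, Finset.card_union_of_disjoint hdisj]
      rw [hcard, pow_succ, pow_add]
      ring
  rw [hsplit, h1, h2, Finset.sum_product]
  have : ∑ A ∈ chains (P.filter (· ⊂ z)), ∑ B ∈ chains (P.filter (z ⊂ ·)),
      -((-1:ℤ)^A.card * (-1:ℤ)^B.card)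
      = -(es (P.filter (· ⊂ z)) * es (P.filter (z ⊂ ·))) := by
    rw [es, es, Finset.sum_mul_sum]
    rw [← Finset.sum_neg_distrib]
    exact Finset.sum_congr rfl fun A _ => by rw [← Finset.sum_neg_distrib]
  rw [this]; ring

end TautAux


namespace TautAux
variable {α : Type*} [DecidableEq α]

lemma es_toggle {P : Finset (Finset α)} {N : Finset α} (hN : N ∈ P)
    (hcomp : ∀ x ∈ P, x ⊆ N ∨ N ⊆ x) : es P = 0 := by
  classical
  have hsplit : es P = (∑ C ∈ (chains P).filter (fun C => N ∈ C), (-1:ℤ)^C.card)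
      + ∑ C ∈ (chains P).filter (fun C => N ∉ C), (-1:ℤ)^C.card :=
    (Finset.sum_filter_add_sum_filter_not _ _ _).symm
  have h2 : ∑ C ∈ (chains P).filter (fun C => N ∉ C), (-1:ℤ)^C.card = es (P.erase N) := by
    rw [chains_erase]; rfl
  have h1 : ∑ C ∈ (chains P).filter (fun C => N ∈ C), (-1:ℤ)^C.card
      = ∑ C ∈ chains (P.erase N), -(-1:ℤ)^C.card := by
    refine Finset.sum_nbij' (fun C => C.erase N) (fun C => insert N C) ?_ ?_ ?_ ?_ ?_
    · intro C hC
      simp only [mem_filter, mem_chains] at hC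
      rw [mem_chains]
      exact ⟨Finset.erase_subset_erase _ hC.1.1, chainP_subset hC.1.2 (erase_subset _ _)⟩
    · intro C hC
      rw [mem_chains] at hC
      obtain ⟨hCP, hCch⟩ := hC
      have hNC : N ∉ C := fun h => (Finset.mem_erase.1 (hCP h)).1 rfl
      simp only [mem_filter, mem_chains]
      refine ⟨⟨Finset.insert_subset hN (hCP.trans (erase_subset _ _)), ?_⟩, mem_insert_self _ _⟩
      intro x hx y hy
      have hx' := mem_insert.1 hx
      have hy' := mem_insert.1 hy
      rcases hx' with rfl | hx'
      · rcases hy' with rfl | hy'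
        · exact Or.inl subset_rfl
        · exact (hcomp y ((erase_subset _ _) (hCP hy'))).symm
      · rcases hy' with rfl | hy'
        · exact hcomp x ((erase_subset _ _) (hCP hx'))
        · exact hCch x hx' y hy'
    · intro C hC
      simp only [mem_filter] at hC
      exact Finset.insert_erase hC.2
    · intro C hC
      rw [mem_chains] at hC
      have hNC : N ∉ C := fun h => (Finset.mem_erase.1 (hC.1 h)).1 rfl
      exact Finset.erase_insert hNC
    · intro C hC
      simp only [mem_filter] at hC
      have : C.card = (C.erase N).card + 1 := by
        rw [Finset.card_erase_of_mem hC.2]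
        have : 1 ≤ C.card := Finset.card_pos.2 ⟨N, hC.2⟩
        omega
      rw [this, pow_succ]; ring
  rw [hsplit, h1, h2, Finset.sum_neg_distrib]
  show -es (P.erase N) + es (P.erase N) = 0
  ring

lemma es_join : ∀ (P : Finset (Finset α)), ∀ N ∈ P, (∀ x ∈ P, x ∪ N ∈ P) → es P = 0 := by
  classical
  intro P
  induction P using Finset.strongInduction with
  | _ P ih =>
    intro N hN hcl
    by_cases hcomp : ∀ x ∈ P, x ⊆ N ∨ N ⊆ x
    · exact es_toggle hN hcomp
    push_neg at hcomp
    obtain ⟨z, hzP, hz1, hz2⟩ := hcomp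
    have hzz : ∀ Q : Finset (Finset α), z ∈ Q → Q.filter (z ⊂ ·) ⊂ Q := by
      intro Q hzQ
      refine Finset.ssubset_iff_of_subset (filter_subset _ _) |>.2 ⟨z, hzQ, ?_⟩
      simp only [mem_filter, not_and]
      exact fun _ => (ssubset_irrefl _)
    have hgt : es (P.filter (z ⊂ ·)) = 0 := by
      refine ih _ (hzz P hzP) (z ∪ N) ?_ ?_
      · simp only [mem_filter]
        refine ⟨hcl z hzP, Finset.ssubset_iff_of_subset Finset.subset_union_left |>.2 ?_⟩
        obtain ⟨a, ha, hna⟩ := Finset.not_subset.1 hz2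
        exact ⟨a, Finset.mem_union_right _ ha, hna⟩
      · intro x hx
        simp only [mem_filter] at hx ⊢
        obtain ⟨hxP, hzx⟩ := hx
        have : x ∪ (z ∪ N) = x ∪ N := by
          rw [← Finset.union_assoc, Finset.union_eq_left.2 hzx.subset]
        rw [this]
        exact ⟨hcl x hxP, Finset.ssubset_of_ssubset_of_subset hzx Finset.subset_union_left⟩
    have herase : es (P.erase z) = 0 := by
      refine ih _ (Finset.erase_ssubset hzP) N ?_ ?_
      · exact Finset.mem_erase.2 ⟨fun h => hz2 (h ▸ subset_rfl), hN⟩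
      · intro x hx
        have hxP := Finset.mem_of_mem_erase hx
        refine Finset.mem_erase.2 ⟨fun h => hz2 (h ▸ Finset.subset_union_right), hcl x hxP⟩
    rw [es_split hzP, herase, hgt, mul_zero, sub_zero]

lemma es_meet : ∀ (P : Finset (Finset α)), ∀ N ∈ P, (∀ x ∈ P, x ∩ N ∈ P) → es P = 0 := by
  classical
  intro P
  induction P using Finset.strongInduction with
  | _ P ih =>
    intro N hN hcl
    by_cases hcomp : ∀ x ∈ P, x ⊆ N ∨ N ⊆ x
    · exact es_toggle hN hcomp
    push_neg at hcomp
    obtain ⟨z, hzP, hz1, hz2⟩ := hcomp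
    have hlt : es (P.filter (· ⊂ z)) = 0 := by
      refine ih _ ?_ (z ∩ N) ?_ ?_
      · refine Finset.ssubset_iff_of_subset (filter_subset _ _) |>.2 ⟨z, hzP, ?_⟩
        simp only [mem_filter, not_and]
        exact fun _ => (ssubset_irrefl _)
      · simp only [mem_filter]
        refine ⟨hcl z hzP, Finset.ssubset_iff_of_subset Finset.inter_subset_left |>.2 ?_⟩
        obtain ⟨a, ha, hna⟩ := Finset.not_subset.1 hz1
        exact ⟨a, ha, fun h => hna (Finset.mem_inter.1 h).2⟩
      · intro x hx
        simp only [mem_filter] at hx ⊢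
        obtain ⟨hxP, hxz⟩ := hx
        have : x ∩ (z ∩ N) = x ∩ N := by
          rw [← Finset.inter_assoc, Finset.inter_eq_left.2 hxz.subset]
        rw [this]
        exact ⟨hcl x hxP, Finset.ssubset_of_subset_of_ssubset Finset.inter_subset_left hxz⟩
    have herase : es (P.erase z) = 0 := by
      refine ih _ (Finset.erase_ssubset hzP) N ?_ ?_
      · exact Finset.mem_erase.2 ⟨fun h => hz1 (h ▸ subset_rfl), hN⟩
      · intro x hx
        have hxP := Finset.mem_of_mem_erase hx
        refine Finset.mem_erase.2 ⟨fun h => hz1 (h ▸ Finset.inter_subset_right), hcl x hxP⟩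
    rw [es_split hzP, herase, hlt, zero_mul, sub_zero]

lemma es_interval : ∀ (n : ℕ) (A B : Finset α), A ⊆ B → (B \ A).card = n → 1 ≤ n →
    es (B.powerset.filter (fun S => A ⊂ S ∧ S ⊂ B)) = (-1)^(n+1) := by
  classical
  intro n
  induction n with
  | zero => intro A B _ _ h; omega
  | succ n ihn =>
    intro A B hAB hcard _
    have hcardAB : A.card + (B \ A).card = B.card := by
      rw [Finset.card_sdiff_of_subset hAB]
      have := Finset.card_le_card hAB
      omega
    by_cases hn : n = 0
    · subst hn
      have hP : B.powerset.filter (fun S => A ⊂ S ∧ S ⊂ B) = ∅ := by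
        rw [Finset.filter_eq_empty_iff]
        rintro S hS ⟨h1, h2⟩
        have c1 := Finset.card_lt_card h1
        have c2 := Finset.card_lt_card h2
        omega
      rw [hP, es_empty]; norm_num
    -- n ≥ 1
    obtain ⟨b, hb⟩ : (B \ A).Nonempty := Finset.card_pos.1 (by omega)
    obtain ⟨hbB, hbA⟩ := Finset.mem_sdiff.1 hb
    obtain ⟨c, hc⟩ : ((B \ A).erase b).Nonempty := by
      apply Finset.card_pos.1
      rw [Finset.card_erase_of_mem hb]
      omega
    have hcb : c ≠ b := (Finset.mem_erase.1 hc).1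
    obtain ⟨hcB, hcA⟩ := Finset.mem_sdiff.1 (Finset.mem_of_mem_erase hc)
    set z := B.erase b with hzdef
    set P := B.powerset.filter (fun S => A ⊂ S ∧ S ⊂ B) with hPdef
    have hzB : z ⊆ B := Finset.erase_subset _ _
    have hAz : A ⊆ z := Finset.subset_erase.2 ⟨hAB, hbA⟩
    have hzP : z ∈ P := by
      rw [hPdef, mem_filter, Finset.mem_powerset]
      refine ⟨hzB, Finset.ssubset_iff_of_subset hAz |>.2 ⟨c, Finset.mem_erase.2 ⟨hcb, hcB⟩, hcA⟩,
        Finset.erase_ssubset hbB⟩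
    have hcardz : z.card + 1 = B.card := by
      rw [hzdef, Finset.card_erase_of_mem hbB]
      have : 1 ≤ B.card := Finset.card_pos.2 ⟨b, hbB⟩
      omega
    have hfilgt : P.filter (z ⊂ ·) = ∅ := by
      rw [Finset.filter_eq_empty_iff]
      intro S hS
      rw [hPdef, mem_filter] at hS
      intro hzS
      have c1 := Finset.card_lt_card hzS
      have c2 := Finset.card_lt_card hS.2.2
      omega
    have hfillt : P.filter (· ⊂ z) = z.powerset.filter (fun S => A ⊂ S ∧ S ⊂ z) := by
      ext S
      simp only [hPdef, mem_filter, Finset.mem_powerset]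
      constructor
      · rintro ⟨⟨-, h1, -⟩, h3⟩
        exact ⟨h3.subset, h1, h3⟩
      · rintro ⟨h0, h1, h2⟩
        exact ⟨⟨h0.trans hzB, h1, Finset.ssubset_of_ssubset_of_subset h2 hzB⟩, h2⟩
    have hsd : z \ A = (B \ A).erase b := by
      ext j
      simp only [hzdef, Finset.mem_sdiff, Finset.mem_erase]
      tauto
    have hlt : es (P.filter (· ⊂ z)) = (-1:ℤ)^(n+1) := by
      rw [hfillt]
      refine ihn A z hAz ?_ (by omega)
      rw [hsd, Finset.card_erase_of_mem hb]
      omega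
    have herase : es (P.erase z) = 0 := by
      refine es_join _ (insert b A) ?_ ?_
      · refine Finset.mem_erase.2 ⟨?_, ?_⟩
        · intro h
          have : b ∈ z := h ▸ Finset.mem_insert_self b A
          exact (Finset.mem_erase.1 this).1 rfl
        · rw [hPdef, mem_filter, Finset.mem_powerset]
          refine ⟨Finset.insert_subset hbB hAB,
            Finset.ssubset_iff_of_subset (Finset.subset_insert _ _) |>.2
              ⟨b, Finset.mem_insert_self _ _, hbA⟩,
            Finset.ssubset_iff_of_subset (Finset.insert_subset hbB hAB) |>.2
              ⟨c, hcB, ?_⟩⟩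
          simp only [Finset.mem_insert, not_or]
          exact ⟨hcb, hcA⟩
      · intro x hx
        have hxz : x ≠ z := (Finset.mem_erase.1 hx).1
        have hxP := Finset.mem_of_mem_erase hx
        rw [hPdef, mem_filter, Finset.mem_powerset] at hxP
        obtain ⟨hxB, hAx, hxB'⟩ := hxP
        refine Finset.mem_erase.2 ⟨?_, ?_⟩
        · intro h
          have : b ∈ z := h ▸ Finset.mem_union_right _ (Finset.mem_insert_self b A)
          exact (Finset.mem_erase.1 this).1 rfl
        · rw [hPdef, mem_filter, Finset.mem_powerset]
          refine ⟨Finset.union_subset hxB (Finset.insert_subset hbB hAB),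
            Finset.ssubset_of_ssubset_of_subset hAx Finset.subset_union_left, ?_⟩
          rw [Finset.ssubset_iff_subset_ne]
          refine ⟨Finset.union_subset hxB (Finset.insert_subset hbB hAB), ?_⟩
          intro h
          -- x ∪ (insert b A) = B  ⇒  x = z, contradiction
          apply hxz
          have hzx : z ⊆ x := by
            intro j hj
            obtain ⟨hjb, hjB⟩ := Finset.mem_erase.1 hj
            have : j ∈ x ∪ insert b A := h ▸ hjB
            rcases Finset.mem_union.1 this with hj' | hj'
            · exact hj'
            · rcases Finset.mem_insert.1 hj' with rfl | hj''
              · exact absurd rfl hjb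
              · exact hAx.subset hj''
          have hbx : b ∉ x := by
            intro hbx
            have : B ⊆ x := by
              intro j hj
              by_cases hjb : j = b
              · exact hjb ▸ hbx
              · exact hzx (Finset.mem_erase.2 ⟨hjb, hj⟩)
            exact (Finset.ssubset_iff_subset_ne.1 hxB').2 (Finset.Subset.antisymm hxB this)
          exact Finset.Subset.antisymm (Finset.subset_erase.2 ⟨hxB, hbx⟩) hzx
    rw [es_split hzP, herase, hfilgt, hlt, es_empty]
    ring

end TautAux


namespace TautAux

lemma matroidRk_empty {α : Type*} (M : Matroid α) : matroidRk M (∅ : Set α) = 0 := by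
  have : {n : ℕ | ∃ I, M.Indep I ∧ I ⊆ (∅ : Set α) ∧ I.ncard = n} = {0} := by
    ext n
    simp only [Set.mem_setOf_eq, Set.mem_singleton_iff]
    constructor
    · rintro ⟨I, -, hI, rfl⟩
      rw [Set.subset_empty_iff] at hI
      simp [hI]
    · rintro rfl
      exact ⟨∅, M.empty_indep, Set.empty_subset _, Set.ncard_empty _⟩
  rw [matroidRk, this, csSup_singleton]

lemma matroidRk_closure_singleton {m : ℕ} (M : Matroid (Fin m)) (hE : M.E = Set.univ)
    (i : Fin m) :
    matroidRk M (M.closure {i}) = if i ∈ M.closure ∅ then 0 else 1 := by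
  have hmemE : ∀ x : Fin m, x ∈ M.E := fun x => hE ▸ Set.mem_univ x
  by_cases hloop : i ∈ M.closure ∅
  · rw [if_pos hloop]
    have hcl : M.closure {i} = M.closure ∅ := by
      have := Matroid.closure_insert_eq_of_mem_closure (X := (∅ : Set (Fin m))) hloop
      simpa using this
    have : {n : ℕ | ∃ I, M.Indep I ∧ I ⊆ M.closure {i} ∧ I.ncard = n} = {0} := by
      ext n
      simp only [Set.mem_setOf_eq, Set.mem_singleton_iff]
      constructor
      · rintro ⟨I, hI, hIsub, rfl⟩
        have : I = ∅ := by
          by_contra hne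
          obtain ⟨x, hx⟩ := Set.nonempty_iff_ne_empty.2 hne
          have hxi : M.Indep {x} := hI.subset (Set.singleton_subset_iff.2 hx)
          have hxcl : x ∈ M.closure ∅ := hcl ▸ hIsub hx
          have : M.Indep (insert x ∅) := by simpa using hxi
          rw [Matroid.insert_indep_iff] at this
          have := this.2 (by simp)
          exact this.2 hxcl
        simp [this]
      · rintro rfl
        exact ⟨∅, M.empty_indep, Set.empty_subset _, Set.ncard_empty _⟩
    rw [matroidRk, this, csSup_singleton]
  · rw [if_neg hloop]
    have hii : M.Indep {i} := by
      rw [show ({i} : Set (Fin m)) = insert i ∅ by simp, Matroid.insert_indep_iff]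
      exact ⟨M.empty_indep, fun _ => ⟨hmemE i, hloop⟩⟩
    have hub : ∀ n ∈ {n : ℕ | ∃ I, M.Indep I ∧ I ⊆ M.closure {i} ∧ I.ncard = n}, n ≤ 1 := by
      rintro n ⟨I, hI, hIsub, rfl⟩
      by_contra hgt
      push_neg at hgt
      have hfin : I.Finite := Set.toFinite I
      rw [Set.one_lt_ncard_iff hfin] at hgt
      obtain ⟨a, b, ha, hb, hab⟩ := hgt
      have hIa : M.Indep {a} := hI.subset (Set.singleton_subset_iff.2 ha)
      have hkey : M.closure {i} ⊆ M.closure {a} := by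
        by_cases hai : a = i
        · subst hai; exact subset_rfl
        have hicl : i ∈ M.closure {a} := by
          by_contra hic
          rw [hIa.notMem_closure_iff_of_notMem (by simp [Ne.symm hai]) (hmemE i)] at hic
          have hIi : M.Indep {i} := hic.subset (by simp)
          have hacl : a ∈ M.closure {i} := hIsub ha
          rw [hIi.mem_closure_iff_of_notMem (by simp [hai])] at hacl
          have : ({a, i} : Set (Fin m)) = insert i {a} := Set.pair_comm a i
          exact hacl.not_indep (this ▸ hic)
        exact Matroid.closure_subset_closure_of_subset_closure
          (Set.singleton_subset_iff.2 hicl)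
      have hbcl : b ∈ M.closure {a} := hkey (hIsub hb)
      rw [hIa.mem_closure_iff_of_notMem (by simp [Ne.symm hab])] at hbcl
      exact hbcl.not_indep (hI.subset (by simp [Set.insert_subset_iff, hb, ha]))
    have hmem : 1 ∈ {n : ℕ | ∃ I, M.Indep I ∧ I ⊆ M.closure {i} ∧ I.ncard = n} :=
      ⟨{i}, hii, M.subset_closure {i} (by rw [hE]; exact Set.subset_univ _),
        Set.ncard_singleton i⟩
    exact IsGreatest.csSup_eq ⟨hmem, hub⟩

end TautAux


namespace TautAux
variable {m : ℕ}

def sval (u : Fin m → ℤ) (S : Finset (Fin m)) : ℤ := ∑ j ∈ S, u j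

def Dset (u : Fin m → ℤ) (T : Finset (Fin m)) : Finset (Finset (Fin m)) :=
  Finset.univ.filter (fun S => S.Nonempty ∧ S ⊂ T ∧ sval u S ≤ 0)

def Uset (u : Fin m → ℤ) (T : Finset (Fin m)) : Finset (Finset (Fin m)) :=
  Finset.univ.filter (fun S => T ⊂ S ∧ S ⊂ Finset.univ ∧ sval u S ≤ 1)

noncomputable def Tfu (u : Fin m → ℤ) (π : Finset (Finset (Fin m))) : Finset (Fin m) :=
  (π.filter (fun S => 1 ≤ sval u S)).inf id

lemma Tfu_spec {u : Fin m → ℤ} {π : Finset (Finset (Fin m))} (hflag : IsFlag m π)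
    (husum : 1 ≤ sval u Finset.univ) :
    Tfu u π ∈ π ∧ 1 ≤ sval u (Tfu u π) ∧
      (∀ S ∈ π, 1 ≤ sval u S → Tfu u π ⊆ S) := by
  classical
  set F := π.filter (fun S => 1 ≤ sval u S) with hF
  have hFne : F.Nonempty := ⟨Finset.univ, by
    rw [hF, mem_filter]; exact ⟨hflag.2.1, husum⟩⟩
  obtain ⟨T0, hT0F, hT0min⟩ := Finset.exists_min_image F Finset.card hFne
  have hT0π : T0 ∈ π := (mem_filter.1 hT0F).1
  have hmin : ∀ S ∈ F, T0 ⊆ S := by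
    intro S hS
    have hSπ : S ∈ π := (mem_filter.1 hS).1
    rcases hflag.2.2 S hSπ T0 hT0π with h | h
    · rw [Finset.eq_of_subset_of_card_le h (hT0min S hS)]
    · exact h
  have hTeq : Tfu u π = T0 := by
    rw [Tfu, ← hF]
    exact le_antisymm (Finset.inf_le hT0F) (Finset.le_inf fun S hS => hmin S hS)
  rw [hTeq]
  exact ⟨hT0π, (mem_filter.1 hT0F).2, fun S hS h1 => hmin S (mem_filter.2 ⟨hS, h1⟩)⟩

lemma flag_card_le {π : Finset (Finset (Fin m))} (hflag : IsFlag m π) : π.card ≤ m := by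
  classical
  have h : π.card ≤ (Finset.Icc 1 m).card := by
    apply Finset.card_le_card_of_injOn (fun S => S.card)
    · intro S hS
      simp only [Finset.mem_coe, Finset.mem_Icc]
      exact ⟨Finset.card_pos.2 (hflag.1 S hS), le_trans (Finset.card_le_card (subset_univ S))
        (by simp)⟩
    · intro S hS T hT hcard
      rcases hflag.2.2 S (Finset.mem_coe.1 hS) T (Finset.mem_coe.1 hT) with h | h
      · exact Finset.eq_of_subset_of_card_le h (le_of_eq hcard.symm)
      · exact (Finset.eq_of_subset_of_card_le h (le_of_eq hcard)).symm
  simpa using h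

lemma neg_pow_sub {k M : ℕ} (h : k ≤ M) : (-1:ℤ)^(M-k) = (-1)^M * (-1)^k := by
  have h2 : ((-1:ℤ)^k) * (-1)^k = 1 := by
    rw [← pow_add]
    exact Even.neg_one_pow ⟨k, rfl⟩
  calc (-1:ℤ)^(M-k) = (-1)^(M-k) * (((-1:ℤ)^k) * (-1)^k) := by rw [h2, mul_one]
    _ = ((-1:ℤ)^(M-k) * (-1)^k) * (-1)^k := by ring
    _ = (-1)^M * (-1)^k := by rw [← pow_add, Nat.sub_add_cancel h]

lemma Aflag_invalid {M : Matroid (Fin m)} {u : Fin m → ℤ} {π : Finset (Finset (Fin m))}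
    (h : ¬ ∀ S ∈ π, sval u S ≤ 1) : Aflag m M u π = ∅ := by
  push_neg at h
  obtain ⟨S, hS, hS1⟩ := h
  ext i
  simp only [Aflag, Set.mem_setOf_eq, Set.mem_empty_iff_false, iff_false, not_forall]
  refine ⟨S, hS, ?_⟩
  split_ifs <;> [exact fun hc => absurd hc (not_le.2 hS1); exact fun hc => absurd hc
    (not_le.2 (lt_trans zero_lt_one hS1))]

lemma Aflag_closure {M : Matroid (Fin m)} {u : Fin m → ℤ} {π : Finset (Finset (Fin m))}
    (hflag : IsFlag m π) (hvalid : ∀ S ∈ π, sval u S ≤ 1)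
    (husum : 1 ≤ sval u Finset.univ) :
    Aflag m M u π = M.closure (↑(Tfu u π) : Set (Fin m)) := by
  obtain ⟨hTmem, hT1, hTmin⟩ := Tfu_spec hflag husum
  ext i
  simp only [Aflag, Set.mem_setOf_eq]
  constructor
  · intro hi
    have := hi (Tfu u π) hTmem
    split_ifs at this with hcl
    · exact hcl
    · exact absurd this (not_le.2 (lt_of_lt_of_le zero_lt_one hT1))
  · intro hi S hS
    split_ifs with hcl
    · exact hvalid S hS
    · by_contra h0
      push_neg at h0
      have h1 : 1 ≤ sval u S := h0
      have hsub := hTmin S hS h1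
      exact hcl (M.closure_subset_closure (Finset.coe_subset.2 hsub) hi)

end TautAux


namespace TautAux
variable {m : ℕ}

lemma fiber_univ (hm : 1 ≤ m) {u : Fin m → ℤ} (hu : sval u Finset.univ = 1) :
    ∑ π ∈ Finset.univ.filter (fun π => (IsFlag m π ∧ (∀ S ∈ π, sval u S ≤ 1))
        ∧ Tfu u π = Finset.univ), (-1:ℤ)^(m - π.card)
      = (-1:ℤ)^(m+1) * es (Dset u Finset.univ) := by
  classical
  have hne : Nonempty (Fin m) := ⟨⟨0, hm⟩⟩
  rw [es, Finset.mul_sum]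
  refine Finset.sum_nbij' (fun π => π.erase Finset.univ) (fun C => insert Finset.univ C)
    ?_ ?_ ?_ ?_ ?_
  · intro π hπ
    simp only [mem_filter, mem_univ, true_and] at hπ
    obtain ⟨⟨hflag, hvalid⟩, hT⟩ := hπ
    obtain ⟨hTmem, hT1, hTmin⟩ := Tfu_spec hflag (le_of_eq hu.symm)
    rw [mem_chains]
    constructor
    · intro S hS
      obtain ⟨hSuniv, hSπ⟩ := Finset.mem_erase.1 hS
      simp only [Dset, mem_filter, mem_univ, true_and]
      refine ⟨hflag.1 S hSπ, Finset.ssubset_iff_subset_ne.2 ⟨subset_univ S, hSuniv⟩, ?_⟩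
      by_contra h0
      push_neg at h0
      have := hTmin S hSπ h0
      rw [hT] at this
      exact hSuniv (Finset.Subset.antisymm (subset_univ S) this)
    · exact fun x hx y hy =>
        hflag.2.2 x (Finset.mem_of_mem_erase hx) y (Finset.mem_of_mem_erase hy)
  · intro C hC
    rw [mem_chains] at hC
    obtain ⟨hCsub, hCch⟩ := hC
    have hCprop : ∀ S ∈ C, S.Nonempty ∧ S ⊂ Finset.univ ∧ sval u S ≤ 0 := by
      intro S hS
      have := hCsub hS
      simpa [Dset] using this
    simp only [mem_filter, mem_univ, true_and]
    refine ⟨⟨⟨?_, mem_insert_self _ _, ?_⟩, ?_⟩, ?_⟩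
    · intro S hS
      rcases mem_insert.1 hS with rfl | hS
      · exact Finset.univ_nonempty
      · exact (hCprop S hS).1
    · intro S hS T hT
      rcases mem_insert.1 hS with rfl | hS
      · exact Or.inr (subset_univ _)
      rcases mem_insert.1 hT with rfl | hT
      · exact Or.inl (subset_univ _)
      · exact hCch S hS T hT
    · intro S hS
      rcases mem_insert.1 hS with rfl | hS
      · exact le_of_eq hu
      · exact le_trans (hCprop S hS).2.2 zero_le_one
    · have hfil : (insert Finset.univ C).filter (fun S => 1 ≤ sval u S) = {Finset.univ} := by
        ext S
        simp only [mem_filter, mem_insert, mem_singleton]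
        constructor
        · rintro ⟨rfl | hS, h1⟩
          · rfl
          · exact absurd h1 (not_le.2 (lt_of_le_of_lt (hCprop S hS).2.2 zero_lt_one))
        · rintro rfl
          exact ⟨Or.inl rfl, le_of_eq hu.symm⟩
      rw [Tfu, hfil, Finset.inf_singleton]
      rfl
  · intro π hπ
    simp only [mem_filter, mem_univ, true_and] at hπ
    exact Finset.insert_erase hπ.1.1.2.1
  · intro C hC
    rw [mem_chains] at hC
    have huC : Finset.univ ∉ C := by
      intro h
      have := hC.1 h
      simp only [Dset, mem_filter] at this
      exact (ssubset_irrefl _) this.2.2.1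
    exact Finset.erase_insert huC
  · intro π hπ
    simp only [mem_filter, mem_univ, true_and] at hπ
    obtain ⟨⟨hflag, hvalid⟩, hT⟩ := hπ
    have hπm := flag_card_le hflag
    have hpos : 1 ≤ π.card := Finset.card_pos.2 ⟨Finset.univ, hflag.2.1⟩
    have hcard : π.card = (π.erase Finset.univ).card + 1 := by
      rw [Finset.card_erase_of_mem hflag.2.1]
      omega
    rw [neg_pow_sub hπm, hcard, pow_succ, pow_succ]
    ring

lemma fiber_ne (hm : 1 ≤ m) {u : Fin m → ℤ} (hu : sval u Finset.univ = 1)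
    {T : Finset (Fin m)} (hTne : T.Nonempty) (hTuniv : T ≠ Finset.univ)
    (hsT : sval u T = 1) :
    ∑ π ∈ Finset.univ.filter (fun π => (IsFlag m π ∧ (∀ S ∈ π, sval u S ≤ 1))
        ∧ Tfu u π = T), (-1:ℤ)^(m - π.card)
      = (-1:ℤ)^m * (es (Dset u T) * es (Uset u T)) := by
  classical
  have hnem : Nonempty (Fin m) := ⟨⟨0, hm⟩⟩
  have hR : (-1:ℤ)^m * (es (Dset u T) * es (Uset u T))
      = ∑ p ∈ (chains (Dset u T)) ×ˢ (chains (Uset u T)),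
          (-1:ℤ)^m * ((-1)^p.1.card * (-1)^p.2.card) := by
    rw [Finset.sum_product]
    rw [es, es, Finset.sum_mul_sum, Finset.mul_sum]
    exact Finset.sum_congr rfl fun A _ => by rw [Finset.mul_sum]
  rw [hR]
  refine Finset.sum_nbij'
    (fun π => (π.filter (· ⊂ T), π.filter (fun S => T ⊂ S ∧ S ≠ Finset.univ)))
    (fun p => insert T (insert Finset.univ (p.1 ∪ p.2))) ?_ ?_ ?_ ?_ ?_
  · -- maps to product
    intro π hπ
    simp only [mem_filter, mem_univ, true_and] at hπ
    obtain ⟨⟨hflag, hvalid⟩, hT⟩ := hπ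
    obtain ⟨hTmem, hT1, hTmin⟩ := Tfu_spec hflag (le_of_eq hu.symm)
    rw [hT] at hTmem hTmin
    simp only [Finset.mem_product]
    constructor
    · rw [mem_chains]
      constructor
      · intro S hS
        obtain ⟨hSπ, hST⟩ := mem_filter.1 hS
        simp only [Dset, mem_filter, mem_univ, true_and]
        refine ⟨hflag.1 S hSπ, hST, ?_⟩
        by_contra h0
        push_neg at h0
        exact (ssubset_irrefl _) (Finset.ssubset_of_subset_of_ssubset (hTmin S hSπ h0) hST)
      · exact fun x hx y hy => hflag.2.2 x (mem_filter.1 hx).1 y (mem_filter.1 hy).1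
    · rw [mem_chains]
      constructor
      · intro S hS
        obtain ⟨hSπ, hTS, hSuniv⟩ : S ∈ π ∧ T ⊂ S ∧ S ≠ Finset.univ := by
          simpa using mem_filter.1 hS
        simp only [Uset, mem_filter, mem_univ, true_and]
        exact ⟨hTS, Finset.ssubset_iff_subset_ne.2 ⟨subset_univ S, hSuniv⟩, hvalid S hSπ⟩
      · exact fun x hx y hy => hflag.2.2 x (mem_filter.1 hx).1 y (mem_filter.1 hy).1
  · -- maps back to fiber
    intro p hp
    simp only [Finset.mem_product, mem_chains] at hp
    obtain ⟨⟨hA, hAch⟩, hB, hBch⟩ := hp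
    have hAprop : ∀ x ∈ p.1, x.Nonempty ∧ x ⊂ T ∧ sval u x ≤ 0 := fun x hx => by
      simpa [Dset] using hA hx
    have hBprop : ∀ x ∈ p.2, T ⊂ x ∧ x ⊂ Finset.univ ∧ sval u x ≤ 1 := fun x hx => by
      simpa [Uset] using hB hx
    have hmem : ∀ x ∈ insert T (insert Finset.univ (p.1 ∪ p.2)),
        x = T ∨ x = Finset.univ ∨ x ∈ p.1 ∨ x ∈ p.2 := by
      intro x hx
      rcases mem_insert.1 hx with rfl | hx
      · exact Or.inl rfl
      rcases mem_insert.1 hx with rfl | hx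
      · exact Or.inr (Or.inl rfl)
      rcases mem_union.1 hx with hx | hx
      · exact Or.inr (Or.inr (Or.inl hx))
      · exact Or.inr (Or.inr (Or.inr hx))
    simp only [mem_filter, mem_univ, true_and]
    refine ⟨⟨⟨?_, mem_insert_of_mem (mem_insert_self _ _), ?_⟩, ?_⟩, ?_⟩
    · intro S hS
      rcases hmem S hS with rfl | rfl | h | h
      · exact hTne
      · exact Finset.univ_nonempty
      · exact (hAprop S h).1
      · exact hTne.mono (hBprop S h).1.subset
    · intro S hS S' hS'
      rcases hmem S hS with rfl | rfl | h1 | h1 <;> rcases hmem S' hS' with rfl | rfl | h2 | h2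
      · exact Or.inl subset_rfl
      · exact Or.inl (subset_univ _)
      · exact Or.inr (hAprop _ h2).2.1.subset
      · exact Or.inl (hBprop _ h2).1.subset
      · exact Or.inr (subset_univ _)
      · exact Or.inl subset_rfl
      · exact Or.inr (subset_univ _)
      · exact Or.inr (subset_univ _)
      · exact Or.inl (hAprop _ h1).2.1.subset
      · exact Or.inl (subset_univ _)
      · exact hAch _ h1 _ h2
      · exact Or.inl (ssubset_trans (hAprop _ h1).2.1 (hBprop _ h2).1).subset
      · exact Or.inr (hBprop _ h1).1.subset
      · exact Or.inl (subset_univ _)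
      · exact Or.inr (ssubset_trans (hAprop _ h2).2.1 (hBprop _ h1).1).subset
      · exact hBch _ h1 _ h2
    · intro S hS
      rcases hmem S hS with rfl | rfl | h | h
      · exact le_of_eq hsT
      · exact le_of_eq hu
      · exact le_trans (hAprop S h).2.2 zero_le_one
      · exact (hBprop S h).2.2
    · apply le_antisymm
      · exact Finset.inf_le (mem_filter.2 ⟨mem_insert_self _ _, le_of_eq hsT.symm⟩)
      · refine Finset.le_inf ?_
        intro S hS
        obtain ⟨hSmem, hS1⟩ := mem_filter.1 hS
        rcases hmem S hSmem with rfl | rfl | h | h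
        · exact subset_rfl
        · exact subset_univ _
        · exact absurd hS1 (not_le.2 (lt_of_le_of_lt (hAprop S h).2.2 zero_lt_one))
        · exact (hBprop S h).1.subset
  · -- left inverse
    intro π hπ
    simp only [mem_filter, mem_univ, true_and] at hπ
    obtain ⟨⟨hflag, hvalid⟩, hT⟩ := hπ
    obtain ⟨hTmem, -, -⟩ := Tfu_spec hflag (le_of_eq hu.symm)
    rw [hT] at hTmem
    ext x
    simp only [mem_insert, mem_union, mem_filter]
    constructor
    · rintro (rfl | rfl | ⟨hx, -⟩ | ⟨hx, -⟩)
      · exact hTmem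
      · exact hflag.2.1
      · exact hx
      · exact hx
    · intro hx
      by_cases hxT : x = T
      · exact Or.inl hxT
      by_cases hxU : x = Finset.univ
      · exact Or.inr (Or.inl hxU)
      rcases hflag.2.2 x hx T hTmem with h | h
      · exact Or.inr (Or.inr (Or.inl ⟨hx, Finset.ssubset_iff_subset_ne.2 ⟨h, hxT⟩⟩))
      · exact Or.inr (Or.inr (Or.inr ⟨hx, Finset.ssubset_iff_subset_ne.2 ⟨h, Ne.symm hxT⟩, hxU⟩))
  · -- right inverse
    intro p hp
    simp only [Finset.mem_product, mem_chains] at hp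
    obtain ⟨⟨hA, hAch⟩, hB, hBch⟩ := hp
    have hAprop : ∀ x ∈ p.1, x.Nonempty ∧ x ⊂ T ∧ sval u x ≤ 0 := fun x hx => by
      simpa [Dset] using hA hx
    have hBprop : ∀ x ∈ p.2, T ⊂ x ∧ x ⊂ Finset.univ ∧ sval u x ≤ 1 := fun x hx => by
      simpa [Uset] using hB hx
    have e1 : (insert T (insert Finset.univ (p.1 ∪ p.2))).filter (· ⊂ T) = p.1 := by
      ext x
      simp only [mem_filter, mem_insert, mem_union]
      constructor
      · rintro ⟨rfl | rfl | hx | hx, hlt⟩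
        · exact absurd hlt (ssubset_irrefl _)
        · exact absurd (Finset.ssubset_of_ssubset_of_subset hlt (subset_univ _)) (ssubset_irrefl _)
        · exact hx
        · exact absurd hlt (ssubset_asymm (hBprop _ hx).1)
      · intro hx
        exact ⟨Or.inr (Or.inr (Or.inl hx)), (hAprop _ hx).2.1⟩
    have e2 : (insert T (insert Finset.univ (p.1 ∪ p.2))).filter
        (fun S => T ⊂ S ∧ S ≠ Finset.univ) = p.2 := by
      ext x
      simp only [mem_filter, mem_insert, mem_union]
      constructor
      · rintro ⟨rfl | rfl | hx | hx, hlt, hne⟩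
        · exact absurd hlt (ssubset_irrefl _)
        · exact absurd rfl hne
        · exact absurd hlt (ssubset_asymm (hAprop _ hx).2.1)
        · exact hx
      · intro hx
        exact ⟨Or.inr (Or.inr (Or.inr hx)), (hBprop _ hx).1,
          (Finset.ssubset_iff_subset_ne.1 (hBprop _ hx).2.1).2⟩
    exact Prod.ext e1 e2
  · -- values
    intro π hπ
    simp only [mem_filter, mem_univ, true_and] at hπ
    obtain ⟨⟨hflag, hvalid⟩, hT⟩ := hπ
    obtain ⟨hTmem, -, -⟩ := Tfu_spec hflag (le_of_eq hu.symm)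
    rw [hT] at hTmem
    have hπm := flag_card_le hflag
    set A := π.filter (· ⊂ T) with hAdef
    set B := π.filter (fun S => T ⊂ S ∧ S ≠ Finset.univ) with hBdef
    have hrec : π = insert T (insert Finset.univ (A ∪ B)) := by
      ext x
      simp only [hAdef, hBdef, mem_insert, mem_union, mem_filter]
      constructor
      · intro hx
        by_cases hxT : x = T
        · exact Or.inl hxT
        by_cases hxU : x = Finset.univ
        · exact Or.inr (Or.inl hxU)
        rcases hflag.2.2 x hx T hTmem with h | h
        · exact Or.inr (Or.inr (Or.inl ⟨hx, Finset.ssubset_iff_subset_ne.2 ⟨h, hxT⟩⟩))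
        · exact Or.inr (Or.inr (Or.inr ⟨hx, Finset.ssubset_iff_subset_ne.2 ⟨h, Ne.symm hxT⟩,
            hxU⟩))
      · rintro (rfl | rfl | ⟨hx, -⟩ | ⟨hx, -⟩)
        · exact hTmem
        · exact hflag.2.1
        · exact hx
        · exact hx
    have hTnot : T ∉ insert Finset.univ (A ∪ B) := by
      simp only [mem_insert, mem_union, hAdef, hBdef, mem_filter]
      rintro (h | ⟨-, h⟩ | ⟨-, h, -⟩)
      · exact hTuniv h
      · exact (ssubset_irrefl _) h
      · exact (ssubset_irrefl _) h
    have hUnot : Finset.univ ∉ A ∪ B := by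
      simp only [mem_union, hAdef, hBdef, mem_filter]
      rintro (⟨-, h⟩ | ⟨-, -, h⟩)
      · exact (ssubset_irrefl _) (Finset.ssubset_of_ssubset_of_subset h (subset_univ _))
      · exact h rfl
    have hdisj : Disjoint A B := by
      rw [Finset.disjoint_left]
      intro x hx hx'
      simp only [hAdef, mem_filter] at hx
      simp only [hBdef, mem_filter] at hx'
      exact (ssubset_irrefl _) (ssubset_trans hx.2 hx'.2.1)
    have hcard : π.card = A.card + B.card + 2 := by
      conv_lhs => rw [hrec]
      rw [Finset.card_insert_of_notMem hTnot, Finset.card_insert_of_notMem hUnot,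
        Finset.card_union_of_disjoint hdisj]
    rw [neg_pow_sub hπm, hcard, pow_add, pow_add]
    norm_num


end TautAux


namespace TautAux
set_option linter.unusedSectionVars false
variable {m : ℕ}

lemma sval_eq_sdiff_add_inter (u : Fin m → ℤ) (X N : Finset (Fin m)) :
    sval u X = sval u (X \ N) + sval u (X ∩ N) := by
  rw [sval, sval, sval, ← Finset.sum_union (Finset.disjoint_sdiff_inter X N),
    Finset.sdiff_union_inter]

lemma sval_union_le {u : Fin m → ℤ} {N : Finset (Fin m)} (hN : ∀ j ∈ N, u j ≤ 0)
    (x : Finset (Fin m)) : sval u (x ∪ N) ≤ sval u x := by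
  have h1 : x ∪ N = x ∪ (N \ x) := (Finset.union_sdiff_self_eq_union).symm
  rw [h1, sval, Finset.sum_union Finset.sdiff_disjoint.symm]
  have : ∑ j ∈ N \ x, u j ≤ 0 :=
    Finset.sum_nonpos (fun j hj => hN j (Finset.mem_sdiff.1 hj).1)
  rw [sval]
  linarith

lemma Dset_singleton (u : Fin m → ℤ) (i : Fin m) : Dset u {i} = ∅ := by
  rw [Dset, Finset.filter_eq_empty_iff]
  rintro S - ⟨hne, hsub, -⟩
  rw [Finset.ssubset_singleton_iff] at hsub
  exact hne.ne_empty hsub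

lemma es_Dset_zero {u : Fin m → ℤ} {T : Finset (Fin m)} (hsT : sval u T = 1)
    (hN : (T.filter (fun j => u j ≤ 0)).Nonempty) : es (Dset u T) = 0 := by
  set N := T.filter (fun j => u j ≤ 0) with hNdef
  have hNle : ∀ j ∈ N, u j ≤ 0 := fun j hj => (mem_filter.1 hj).2
  have hNsub : N ⊆ T := filter_subset _ _
  have hsvalN : sval u N ≤ 0 := Finset.sum_nonpos hNle
  have hNneT : N ≠ T := by
    intro h
    rw [h, hsT] at hsvalN
    linarith
  apply es_join _ N
  · simp only [Dset, mem_filter, mem_univ, true_and]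
    exact ⟨hN, Finset.ssubset_iff_subset_ne.2 ⟨hNsub, hNneT⟩, hsvalN⟩
  · intro x hx
    simp only [Dset, mem_filter, mem_univ, true_and] at hx ⊢
    obtain ⟨hxne, hxT, hx0⟩ := hx
    obtain ⟨a, ha⟩ := hxne
    refine ⟨⟨a, Finset.mem_union_left _ ha⟩, ?_, le_trans (sval_union_le hNle x) hx0⟩
    rw [Finset.ssubset_iff_subset_ne]
    refine ⟨Finset.union_subset hxT.subset hNsub, ?_⟩
    intro h
    -- x ∪ N = T leads to contradiction
    have hxsdiff : x \ N = T \ N := by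
      apply Finset.Subset.antisymm
      · exact Finset.sdiff_subset_sdiff hxT.subset subset_rfl
      · intro j hj
        obtain ⟨hjT, hjN⟩ := Finset.mem_sdiff.1 hj
        have : j ∈ x ∪ N := h ▸ hjT
        rcases Finset.mem_union.1 this with h' | h'
        · exact Finset.mem_sdiff.2 ⟨h', hjN⟩
        · exact absurd h' hjN
    have h1 : sval u x = sval u (T \ N) + sval u (x ∩ N) := by
      rw [sval_eq_sdiff_add_inter u x N, hxsdiff]
    have h2 : sval u N = sval u (N \ x) + sval u (N ∩ x) := sval_eq_sdiff_add_inter u N x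
    have h3 : sval u (N \ x) ≤ 0 :=
      Finset.sum_nonpos (fun j hj => hNle j (Finset.mem_sdiff.1 hj).1)
    have h4 : sval u T = sval u (T \ N) + sval u (T ∩ N) := sval_eq_sdiff_add_inter u T N
    have h5 : T ∩ N = N := Finset.inter_eq_right.2 hNsub
    have h6 : x ∩ N = N ∩ x := Finset.inter_comm x N
    rw [h5] at h4
    rw [h6] at h1
    rw [hsT] at h4
    linarith

lemma eq_singleton_of_pos {u : Fin m → ℤ} {T : Finset (Fin m)} (hsT : sval u T = 1)
    (hTne : T.Nonempty) (hpos : ∀ j ∈ T, ¬ u j ≤ 0) : ∃ i, T = {i} ∧ u i = 1 := by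
  have hcard : (T.card : ℤ) ≤ sval u T := by
    rw [sval]
    calc (T.card : ℤ) = ∑ _j ∈ T, (1:ℤ) := by simp
    _ ≤ ∑ j ∈ T, u j := Finset.sum_le_sum (fun j hj => by have := hpos j hj; omega)
  rw [hsT] at hcard
  have hc1 : T.card = 1 := by
    have := Finset.card_pos.2 hTne
    omega
  obtain ⟨i, hi⟩ := Finset.card_eq_one.1 hc1
  refine ⟨i, hi, ?_⟩
  have h := hsT
  rw [hi, sval, Finset.sum_singleton] at h
  exact h

lemma es_Uset_zero {u : Fin m → ℤ} {i : Fin m} (hui : u i = 1)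
    (hu : sval u Finset.univ = 1) (hne : u ≠ stdVec m i) : es (Uset u {i}) = 0 := by
  have hadd := Finset.sum_erase_add Finset.univ u (mem_univ i)
  have hrest : ∑ j ∈ Finset.univ.erase i, u j = 0 := by
    rw [hui] at hadd
    have : sval u Finset.univ = ∑ j ∈ Finset.univ, u j := rfl
    rw [this] at hu
    linarith
  have hexk : ∃ k ∈ Finset.univ.erase i, u k < 0 := by
    by_contra h
    push_neg at h
    apply hne
    funext j
    by_cases hj : j = i
    · rw [hj, hui]; simp [stdVec]
    · have hj0 : u j = 0 :=
        (Finset.sum_eq_zero_iff_of_nonneg h).1 hrest j (Finset.mem_erase.2 ⟨hj, mem_univ j⟩)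
      rw [hj0]; simp [stdVec, hj]
  obtain ⟨k, hk, hk0⟩ := hexk
  have hkne : k ≠ i := (Finset.mem_erase.1 hk).1
  have hexq : ∃ q ∈ Finset.univ.erase i, 1 ≤ u q := by
    by_contra h
    push_neg at h
    have hlt : ∑ j ∈ Finset.univ.erase i, u j < ∑ _j ∈ Finset.univ.erase i, (0:ℤ) :=
      Finset.sum_lt_sum (fun j hj => by have := h j hj; omega) ⟨k, hk, hk0⟩
    rw [Finset.sum_const_zero] at hlt
    linarith
  obtain ⟨q, hq, hq1⟩ := hexq
  have hqne : q ≠ i := (Finset.mem_erase.1 hq).1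
  set N := insert i (Finset.univ.filter (fun j => u j ≤ 0)) with hNdef
  apply es_meet _ N
  · simp only [Uset, mem_filter, mem_univ, true_and]
    refine ⟨?_, ?_, ?_⟩
    · rw [Finset.ssubset_iff_subset_ne]
      refine ⟨Finset.singleton_subset_iff.2 (mem_insert_self _ _), ?_⟩
      intro h
      have hkN : k ∈ N := by
        rw [hNdef]
        exact mem_insert_of_mem (mem_filter.2 ⟨mem_univ k, le_of_lt hk0⟩)
      rw [← h] at hkN
      exact hkne (Finset.mem_singleton.1 hkN)
    · rw [Finset.ssubset_iff_subset_ne]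
      refine ⟨subset_univ _, ?_⟩
      intro h
      have hqN : q ∈ N := h ▸ mem_univ q
      rw [hNdef] at hqN
      rcases mem_insert.1 hqN with h' | h'
      · exact hqne h'
      · have := (mem_filter.1 h').2; omega
    · have hinot : i ∉ Finset.univ.filter (fun j => u j ≤ 0) := by
        simp only [mem_filter]
        rintro ⟨-, h⟩
        rw [hui] at h
        omega
      rw [hNdef, sval, Finset.sum_insert hinot, hui]
      have : ∑ j ∈ Finset.univ.filter (fun j => u j ≤ 0), u j ≤ 0 :=
        Finset.sum_nonpos (fun j hj => (mem_filter.1 hj).2)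
      linarith
  · intro S hS
    simp only [Uset, mem_filter, mem_univ, true_and] at hS ⊢
    obtain ⟨hiS, hSuniv, hS1⟩ := hS
    have hiS' : i ∈ S := hiS.subset (Finset.mem_singleton_self i)
    refine ⟨?_, Finset.ssubset_of_subset_of_ssubset Finset.inter_subset_left hSuniv, ?_⟩
    · rw [Finset.ssubset_iff_subset_ne]
      constructor
      · exact Finset.singleton_subset_iff.2
          (Finset.mem_inter.2 ⟨hiS', by rw [hNdef]; exact mem_insert_self _ _⟩)
      · have herne : (S.erase i).Nonempty := by
          obtain ⟨x, hxS, hxi⟩ := Finset.exists_of_ssubset hiS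
          exact ⟨x, Finset.mem_erase.2 ⟨fun h => hxi (Finset.mem_singleton.2 h), hxS⟩⟩
        have hsum : ∑ j ∈ S.erase i, u j ≤ 0 := by
          have hadd' := Finset.sum_erase_add S u hiS'
          rw [hui] at hadd'
          have : sval u S = ∑ j ∈ S, u j := rfl
          rw [this] at hS1
          linarith
        have hexj : ∃ j ∈ S.erase i, u j ≤ 0 := by
          by_contra h
          push_neg at h
          have : (0:ℤ) < ∑ j ∈ S.erase i, u j :=
            Finset.sum_pos (fun j hj => h j hj) herne
          linarith
        obtain ⟨j, hj, hju⟩ := hexj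
        intro h
        have hjmem : j ∈ S ∩ N := Finset.mem_inter.2 ⟨Finset.mem_of_mem_erase hj, by
          rw [hNdef]; exact mem_insert_of_mem (mem_filter.2 ⟨mem_univ j, hju⟩)⟩
        rw [← h] at hjmem
        exact (Finset.mem_erase.1 hj).1 (Finset.mem_singleton.1 hjmem)
    · have hsplit := sval_eq_sdiff_add_inter u S N
      have h0 : 0 ≤ sval u (S \ N) := by
        apply Finset.sum_nonneg
        intro j hj
        have hjN : j ∉ N := (Finset.mem_sdiff.1 hj).2
        rw [hNdef] at hjN
        simp only [mem_insert, mem_filter, mem_univ, true_and, not_or] at hjN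
        omega
      linarith

lemma sval_stdVec (i : Fin m) (S : Finset (Fin m)) :
    sval (stdVec m i) S = if i ∈ S then 1 else 0 := by
  simp [sval, stdVec, Finset.sum_ite_eq']

lemma es_Uset_stdVec {i : Fin m} (h : ({i} : Finset (Fin m)) ≠ Finset.univ) :
    es (Uset (stdVec m i) {i}) = (-1:ℤ)^m := by
  have hlt : 1 < m := by
    have h1 := Finset.card_lt_card (Finset.ssubset_iff_subset_ne.2 ⟨subset_univ _, h⟩)
    rw [Finset.card_singleton, Finset.card_univ, Fintype.card_fin] at h1
    exact h1
  have hU : Uset (stdVec m i) {i}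
      = Finset.univ.powerset.filter (fun S => {i} ⊂ S ∧ S ⊂ Finset.univ) := by
    ext S
    simp only [Uset, mem_filter, mem_univ, true_and, Finset.mem_powerset, subset_univ,
      true_and]
    constructor
    · rintro ⟨h1, h2, -⟩; exact ⟨h1, h2⟩
    · rintro ⟨h1, h2⟩
      refine ⟨h1, h2, ?_⟩
      rw [sval_stdVec]
      split_ifs <;> norm_num
  rw [hU, es_interval (m-1) {i} Finset.univ (subset_univ _) ?_ (by omega)]
  · rw [show m - 1 + 1 = m from by omega]
  · rw [Finset.card_sdiff_of_subset (subset_univ _), Finset.card_singleton, Finset.card_univ,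
      Fintype.card_fin]


end TautAux


open TautAux


theorem tautological_euler_char_eq_h0 (m : ℕ) (hm : 1 ≤ m)
    (M : Matroid (Fin m)) (hE : M.E = Set.univ)
    (u : Fin m → ℤ) (hu : ∑ j, u j = 1) :
    ∑ π ∈ Finset.univ.filter (IsFlag m),
        (-1 : ℤ) ^ (m - π.card) * (matroidRk M (Aflag m M u π) : ℤ) =
      (if ∃ i : Fin m, i ∉ M.closure ∅ ∧ u = stdVec m i then 1 else 0) := by
  classical
  have husval : sval u Finset.univ = 1 := hu
  have hus1 : (1:ℤ) ≤ sval u Finset.univ := le_of_eq husval.symm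
  set FlagsV := Finset.univ.filter
    (fun π : Finset (Finset (Fin m)) => IsFlag m π ∧ (∀ S ∈ π, sval u S ≤ 1)) with hFV
  have hsub : FlagsV ⊆ Finset.univ.filter (IsFlag m) := by
    intro π hπ
    rw [hFV, mem_filter] at hπ
    exact mem_filter.2 ⟨mem_univ _, hπ.2.1⟩
  have hstep1 : ∑ π ∈ Finset.univ.filter (IsFlag m),
      (-1:ℤ)^(m-π.card) * (matroidRk M (Aflag m M u π) : ℤ)
      = ∑ π ∈ FlagsV, (-1:ℤ)^(m-π.card) * (matroidRk M (Aflag m M u π) : ℤ) := by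
    refine (Finset.sum_subset hsub ?_).symm
    intro π hπ hπn
    have hflag : IsFlag m π := (mem_filter.1 hπ).2
    have hnv : ¬ ∀ S ∈ π, sval u S ≤ 1 := by
      intro h
      exact hπn (by rw [hFV, mem_filter]; exact ⟨mem_univ _, hflag, h⟩)
    rw [Aflag_invalid hnv, matroidRk_empty]
    simp
  rw [hstep1]
  set Ts := Finset.univ.filter
    (fun T : Finset (Fin m) => T.Nonempty ∧ sval u T = 1) with hTs
  have hmaps : ∀ π ∈ FlagsV, Tfu u π ∈ Ts := by
    intro π hπ
    rw [hFV, mem_filter] at hπ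
    obtain ⟨-, hflag, hvalid⟩ := hπ
    obtain ⟨hTmem, hT1, -⟩ := Tfu_spec hflag hus1
    rw [hTs, mem_filter]
    exact ⟨mem_univ _, hflag.1 _ hTmem, le_antisymm (hvalid _ hTmem) hT1⟩
  rw [← Finset.sum_fiberwise_of_maps_to hmaps]
  have hinner : ∀ T ∈ Ts, (∑ π ∈ FlagsV.filter (fun π => Tfu u π = T),
      (-1:ℤ)^(m-π.card) * (matroidRk M (Aflag m M u π) : ℤ))
      = (matroidRk M (M.closure (T : Set (Fin m))) : ℤ)
        * ∑ π ∈ FlagsV.filter (fun π => Tfu u π = T), (-1:ℤ)^(m-π.card) := by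
    intro T hT
    rw [Finset.mul_sum]
    apply Finset.sum_congr rfl
    intro π hπ
    obtain ⟨hπV, hπT⟩ := mem_filter.1 hπ
    rw [hFV, mem_filter] at hπV
    obtain ⟨-, hflag, hvalid⟩ := hπV
    rw [Aflag_closure hflag hvalid hus1, hπT]
    ring
  rw [Finset.sum_congr rfl hinner]
  have hfilter_eq : ∀ T : Finset (Fin m), FlagsV.filter (fun π => Tfu u π = T)
      = Finset.univ.filter (fun π => (IsFlag m π ∧ (∀ S ∈ π, sval u S ≤ 1))
          ∧ Tfu u π = T) := by
    intro T
    rw [hFV, Finset.filter_filter]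
  by_cases hex : ∃ i : Fin m, u = stdVec m i
  · obtain ⟨i, rfl⟩ := hex
    have hui : stdVec m i i = 1 := by simp [stdVec]
    have hsingmem : ({i} : Finset (Fin m)) ∈ Ts := by
      rw [hTs, mem_filter]
      refine ⟨mem_univ _, Finset.singleton_nonempty i, ?_⟩
      rw [sval_stdVec]
      simp
    rw [Finset.sum_eq_single_of_mem ({i} : Finset (Fin m)) hsingmem ?_]
    · -- the singleton term
      have hcoe : ((({i} : Finset (Fin m)) : Set (Fin m))) = ({i} : Set (Fin m)) := by
        simp
      rw [hfilter_eq, hcoe, matroidRk_closure_singleton M hE i]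
      have hc : (∑ π ∈ Finset.univ.filter (fun π =>
          (IsFlag m π ∧ (∀ S ∈ π, sval (stdVec m i) S ≤ 1))
          ∧ Tfu (stdVec m i) π = ({i} : Finset (Fin m))), (-1:ℤ)^(m - π.card)) = 1 := by
        by_cases hiu : ({i} : Finset (Fin m)) = Finset.univ
        · rw [hiu, fiber_univ hm husval, ← hiu, Dset_singleton, es_empty]
          have hm1 : m = 1 := by
            have := congrArg Finset.card hiu
            rw [Finset.card_singleton, Finset.card_univ, Fintype.card_fin] at this
            omega
          rw [hm1]
          norm_num
        · rw [fiber_ne hm husval (Finset.singleton_nonempty i) hiu (by rw [sval_stdVec]; simp),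
            Dset_singleton, es_empty, es_Uset_stdVec hiu, one_mul, ← pow_add]
          exact Even.neg_one_pow ⟨m, rfl⟩
      rw [hc, mul_one]
      by_cases hloop : i ∈ M.closure ∅
      · rw [if_pos hloop, if_neg]
        · norm_num
        · rintro ⟨i', hi', hui'⟩
          have hii' : i = i' := by
            have h1 : stdVec m i i = stdVec m i' i := by rw [← hui']
            rw [hui] at h1
            simp only [stdVec] at h1
            by_contra hne
            rw [if_neg hne] at h1
            exact one_ne_zero h1
          exact hi' (hii' ▸ hloop)
      · rw [if_neg hloop, if_pos ⟨i, hloop, rfl⟩]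
        norm_num
    · -- other terms vanish
      intro T hT hTne'
      rw [hTs, mem_filter] at hT
      obtain ⟨-, hTne, hsT⟩ := hT
      rw [hfilter_eq]
      by_cases hTu : T = Finset.univ
      · subst hTu
        rw [fiber_univ hm husval]
        have hDzero : es (Dset (stdVec m i) Finset.univ) = 0 := by
          apply es_Dset_zero husval
          have hj : ∃ j : Fin m, j ≠ i := by
            by_contra h
            push_neg at h
            exact hTne' (by ext j; simp [h j])
          obtain ⟨j, hj⟩ := hj
          exact ⟨j, mem_filter.2 ⟨mem_univ _, by simp [stdVec, hj]⟩⟩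
        rw [hDzero]
        ring
      · rw [fiber_ne hm husval hTne hTu hsT]
        by_cases hNT : (T.filter (fun j => stdVec m i j ≤ 0)).Nonempty
        · rw [es_Dset_zero hsT hNT]
          ring
        · exfalso
          rw [Finset.not_nonempty_iff_eq_empty, Finset.filter_eq_empty_iff] at hNT
          obtain ⟨i', hTi', hui'⟩ := eq_singleton_of_pos hsT hTne hNT
          have : i' = i := by
            simp only [stdVec] at hui'
            by_contra hne
            rw [if_neg hne] at hui'
            exact zero_ne_one hui'
          exact hTne' (this ▸ hTi')
  · rw [if_neg (by rintro ⟨i, -, hui⟩; exact hex ⟨i, hui⟩)]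
    apply Finset.sum_eq_zero
    intro T hT
    rw [hTs, mem_filter] at hT
    obtain ⟨-, hTne, hsT⟩ := hT
    rw [hfilter_eq]
    by_cases hTu : T = Finset.univ
    · subst hTu
      rw [fiber_univ hm husval]
      have hDzero : es (Dset u Finset.univ) = 0 := by
        apply es_Dset_zero husval
        by_contra hNT
        rw [Finset.not_nonempty_iff_eq_empty, Finset.filter_eq_empty_iff] at hNT
        obtain ⟨i0, hT0, hui0⟩ := eq_singleton_of_pos husval hTne hNT
        apply hex
        refine ⟨i0, funext fun j => ?_⟩
        have hj : j = i0 := by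
          have : j ∈ ({i0} : Finset (Fin m)) := hT0 ▸ mem_univ j
          exact Finset.mem_singleton.1 this
        rw [hj, hui0]
        simp [stdVec]
      rw [hDzero]
      ring
    · rw [fiber_ne hm husval hTne hTu hsT]
      by_cases hNT : (T.filter (fun j => u j ≤ 0)).Nonempty
      · rw [es_Dset_zero hsT hNT]
        ring
      · rw [Finset.not_nonempty_iff_eq_empty, Finset.filter_eq_empty_iff] at hNT
        obtain ⟨i', hTi', hui'⟩ := eq_singleton_of_pos hsT hTne hNT
        subst hTi'
        rw [es_Uset_zero hui' husval (fun h => hex ⟨i', h⟩)]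
        ring
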